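/- Let σ and σ' be permutations of (1,2,3), and let W, U ∈ 𝓜 be two words such that either both W and U are trunk words or both W and U are branch words. Then there exist linear automorphisms Φ and Ψ of ℝ³ such that for every X ∈ 𝓜 and every M ∈ {K,S,T}, Φ(c_M^{σ,WX}) = c_M^{σ',UX} and Ψ(g_M^{σ,WX}) = g_M^{σ',UX}. -/

import Mathlib

namespace Markov

/-- The ambient space ℝ³. -/
abbrev V3 : Type := Fin 3 → ℝ

/-- Standard basis vectors ẽ₁, ẽ₂, ẽ₃ (indexed by `Fin 3`). -/
noncomputable def e (i : Fin 3) : V3 := Pi.single i 1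

/-- The two generating letters of the free monoid 𝓜. -/
inductive Lt
  | S
  | T
  deriving DecidableEq

/-- Elements of the free monoid 𝓜 on `{S, T}`, as words (lists of letters
read left to right); the monoid operation is `++` and the identity is `[]`. -/
abbrev Word := List Lt

/-- A word is a trunk word iff it consists only of the letter `S`
(otherwise it is a branch word). -/
def IsTrunk (X : Word) : Prop := ∀ l ∈ X, l = Lt.S

/-- Boolean trunk test. -/
def trunkB (X : Word) : Bool := X.all (fun l => decide (l = Lt.S))

/-- One mutation step for the triple `(g_K, g_S, g_T)`; the flag `trunk`
records whether the word being extended (on the right) is a trunk word. -/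
noncomputable def gStep (trunk : Bool) (l : Lt) (v : V3 × V3 × V3) :
    V3 × V3 × V3 :=
  match l with
  | Lt.S => (2 • v.1 - v.2.1, v.1, v.2.2)
  | Lt.T =>
    if trunk then (2 • v.2.1 - v.2.2, v.2.1, v.1)
    else (2 • v.1 - v.2.2, v.1, v.2.1)

/-- Auxiliary recursion computing the g-vectors from the reversed word
(head of the list = last letter of the word). -/
noncomputable def gRev (k s t : Fin 3) : Word → V3 × V3 × V3
  | [] => (2 • e s - e k, e s, e t)
  | l :: X => gStep (trunkB X) l (gRev k s t X)

/-- The triple of modified g-vectors `(g_K^X, g_S^X, g_T^X)` for the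
permutation `(k₀, s₀, t₀) = (k, s, t)` of the indices. -/
noncomputable def g (k s t : Fin 3) (X : Word) : V3 × V3 × V3 :=
  gRev k s t X.reverse

/-- One mutation step for the triple `(c_K, c_S, c_T)`. -/
noncomputable def cStep (trunk : Bool) (l : Lt) (v : V3 × V3 × V3) :
    V3 × V3 × V3 :=
  match l with
  | Lt.S => (-v.2.1, v.1 + 2 • v.2.1, v.2.2)
  | Lt.T =>
    if trunk then (-v.2.2, v.2.1 + 2 • v.2.2, v.1)
    else (-v.2.2, v.1 + 2 • v.2.2, v.2.1)

noncomputable def cRev (k s t : Fin 3) : Word → V3 × V3 × V3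
  | [] => (-(e k), e s + 2 • e k, e t)
  | l :: X => cStep (trunkB X) l (cRev k s t X)

/-- The triple of modified c-vectors `(c_K^X, c_S^X, c_T^X)`. -/
noncomputable def c (k s t : Fin 3) (X : Word) : V3 × V3 × V3 :=
  cRev k s t X.reverse

/-- `g_F^X = g_S^X + g_T^X − g_K^X`. -/
noncomputable def gF (k s t : Fin 3) (X : Word) : V3 :=
  (g k s t X).2.1 + (g k s t X).2.2 - (g k s t X).1

/-- `v_SK^X = g_K^X − g_S^X`. -/
noncomputable def vSK (k s t : Fin 3) (X : Word) : V3 :=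
  (g k s t X).1 - (g k s t X).2.1

/-- `v_TK^X = g_K^X − g_T^X`. -/
noncomputable def vTK (k s t : Fin 3) (X : Word) : V3 :=
  (g k s t X).1 - (g k s t X).2.2

/-- `c_F^X = c_K^X + c_S^X + c_T^X`. -/
noncomputable def cF (k s t : Fin 3) (X : Word) : V3 :=
  (c k s t X).1 + (c k s t X).2.1 + (c k s t X).2.2

/-- `x_SK^X = c_K^X + c_S^X`. -/
noncomputable def xSK (k s t : Fin 3) (X : Word) : V3 :=
  (c k s t X).1 + (c k s t X).2.1

/-- `x_TK^X = −(c_K^X + c_T^X)`. -/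
noncomputable def xTK (k s t : Fin 3) (X : Word) : V3 :=
  -((c k s t X).1 + (c k s t X).2.2)

/-- Closed cone spanned by two vectors. -/
def C2 (v1 v2 : V3) : Set V3 :=
  {x | ∃ la lb : ℝ, 0 ≤ la ∧ 0 ≤ lb ∧ x = la • v1 + lb • v2}

/-- Relatively open cone spanned by two vectors. -/
def C2o (v1 v2 : V3) : Set V3 :=
  {x | ∃ la lb : ℝ, 0 < la ∧ 0 < lb ∧ x = la • v1 + lb • v2}

/-- Closed cone spanned by three vectors. -/
def C3 (v1 v2 v3 : V3) : Set V3 :=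
  {x | ∃ la lb lc : ℝ, 0 ≤ la ∧ 0 ≤ lb ∧ 0 ≤ lc ∧ x = la • v1 + lb • v2 + lc • v3}

/-- Relatively open cone spanned by four vectors. -/
def C4o (v1 v2 v3 v4 : V3) : Set V3 :=
  {x | ∃ la lb lc ld : ℝ, 0 < la ∧ 0 < lb ∧ 0 < lc ∧ 0 < ld ∧
    x = la • v1 + lb • v2 + lc • v3 + ld • v4}

/-- The set `U_∘^X = C°(g_S^X, g_T^X, v_SK^X, v_TK^X)`. -/
noncomputable def Uo (k s t : Fin 3) (X : Word) : Set V3 :=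
  C4o (g k s t X).2.1 (g k s t X).2.2 (vSK k s t X) (vTK k s t X)

/-- The set `U^W = U_∘^W ∪ C(g_S^W, g_T^W)`. -/
noncomputable def Uset (k s t : Fin 3) (W : Word) : Set V3 :=
  Uo k s t W ∪ C2 (g k s t W).2.1 (g k s t W).2.2

/-- Recursion step for the Calkin–Wilf-type coefficients `q`. -/
def qstep (l : Lt) (p : ℤ × ℤ) : ℤ × ℤ :=
  match l with
  | Lt.S => (p.1 + p.2, p.2)
  | Lt.T => (p.2, p.1 + p.2)

/-- `qfun init X` : the pair obtained from `init` by the recursion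
`q^{SX} = (a+b, b)`, `q^{TX} = (b, a+b)` (letters prepended). -/
def qfun (init : ℤ × ℤ) : Word → ℤ × ℤ
  | [] => init
  | l :: X => qstep l (qfun init X)

/-- Recursion step for the coefficients `p`. -/
def pstep (l : Lt) (p : ℤ × ℤ) : ℤ × ℤ :=
  match l with
  | Lt.S => (p.1 + p.2, p.2)
  | Lt.T => (-p.2, -p.1 - p.2)

/-- `pfun init X` : the pair obtained from `init` by the recursion
`p^{SX} = (a+b, b)`, `p^{TX} = (−b, −a−b)` (letters prepended). -/
def pfun (init : ℤ × ℤ) : Word → ℤ × ℤ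
  | [] => init
  | l :: X => pstep l (pfun init X)

/-- The three index data `σ₁ = (1,3,2)`, `σ₂ = (2,1,3)`, `σ₃ = (3,2,1)`
(written with indices `0,1,2` instead of `1,2,3`). -/
def sig : Fin 3 → Fin 3 × Fin 3 × Fin 3 :=
  ![(0, 2, 1), (1, 0, 2), (2, 1, 0)]

/-- Modified g-vectors for the `i`-th subtree of the Markov quiver. -/
noncomputable def gM (i : Fin 3) (X : Word) : V3 × V3 × V3 :=
  g (sig i).1 (sig i).2.1 (sig i).2.2 X

/-- `𝔤ᵢ = ẽ_{s₀(i)} + ẽ_{t₀(i)} − ẽ_{k₀(i)}`. -/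
noncomputable def giFrak (i : Fin 3) : V3 :=
  e (sig i).2.1 + e (sig i).2.2 - e (sig i).1

/-- The set `𝔊ᵢ` of modified g-vectors in the `i`-th subtree. -/
noncomputable def Gset (i : Fin 3) : Set V3 :=
  {v | ∃ a b : ℤ, 1 ≤ a ∧ 1 ≤ b ∧ Int.gcd a b = 1 ∧
      v = giFrak i + (a : ℝ) • (e (sig i).1 - e (sig i).2.2) +
        (b : ℝ) • (e (sig i).2.1 - e (sig i).1)} ∪
    {e (sig i).2.1}

/-- The support `𝒮` of the G-fan of the Markov quiver. -/
noncomputable def Supp : Set V3 :=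
  C3 (e 0) (e 1) (e 2) ∪
    ⋃ (i : Fin 3), ⋃ (X : Word), C3 (gM i X).1 (gM i X).2.1 (gM i X).2.2

/-- The half space `V = {x : x₁+x₂+x₃ > 0} ∪ {0}`. -/
def Vhalf : Set V3 := {x | 0 < x 0 + x 1 + x 2} ∪ {0}

/-! ### Auxiliary lemmas for stmt_0 -/

/-- Apply a linear map to each component of a triple. -/
noncomputable def mapTri (Φ : V3 →ₗ[ℝ] V3) (v : V3 × V3 × V3) : V3 × V3 × V3 :=
  (Φ v.1, Φ v.2.1, Φ v.2.2)

/-- The triple as a function `Fin 3 → V3`. -/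
noncomputable def triFun (v : V3 × V3 × V3) : Fin 3 → V3 := ![v.1, v.2.1, v.2.2]

lemma mapTri_cStep (Φ : V3 →ₗ[ℝ] V3) (b : Bool) (l : Lt) (v : V3 × V3 × V3) :
    mapTri Φ (cStep b l v) = cStep b l (mapTri Φ v) := by
  cases l <;> cases b <;> simp [mapTri, cStep, map_add, map_neg, map_nsmul, two_mul]

lemma mapTri_gStep (Φ : V3 →ₗ[ℝ] V3) (b : Bool) (l : Lt) (v : V3 × V3 × V3) :
    mapTri Φ (gStep b l v) = gStep b l (mapTri Φ v) := by
  cases l <;> cases b <;> simp [mapTri, gStep, map_add, map_sub, map_nsmul, two_mul]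

lemma trunkB_append (A B : Word) : trunkB (A ++ B) = (trunkB A && trunkB B) :=
  List.all_append

lemma trunkB_reverse (A : Word) : trunkB A.reverse = trunkB A :=
  List.all_reverse

lemma isTrunk_iff (X : Word) : IsTrunk X ↔ trunkB X = true := by
  simp [IsTrunk, trunkB, List.all_eq_true]

lemma cRev_map (k s t k' s' t' : Fin 3) (Φ : V3 →ₗ[ℝ] V3) (A B : Word)
    (hb : trunkB A = trunkB B)
    (h : mapTri Φ (cRev k s t A) = cRev k' s' t' B) :
    ∀ Y : Word, mapTri Φ (cRev k s t (Y ++ A)) = cRev k' s' t' (Y ++ B) := by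
  intro Y
  induction Y with
  | nil => simpa using h
  | cons l Y ih =>
      have hb' : trunkB (Y ++ A) = trunkB (Y ++ B) := by
        simp [trunkB_append, hb]
      simp only [List.cons_append, List.append_eq, cRev, mapTri_cStep, ih, hb']

lemma gRev_map (k s t k' s' t' : Fin 3) (Φ : V3 →ₗ[ℝ] V3) (A B : Word)
    (hb : trunkB A = trunkB B)
    (h : mapTri Φ (gRev k s t A) = gRev k' s' t' B) :
    ∀ Y : Word, mapTri Φ (gRev k s t (Y ++ A)) = gRev k' s' t' (Y ++ B) := by
  intro Y
  induction Y with
  | nil => simpa using h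
  | cons l Y ih =>
      have hb' : trunkB (Y ++ A) = trunkB (Y ++ B) := by
        simp [trunkB_append, hb]
      simp only [List.cons_append, List.append_eq, gRev, mapTri_gStep, ih, hb']

lemma fin3_cover : ∀ k s t i : Fin 3, k ≠ s → k ≠ t → s ≠ t →
    (i = k ∨ i = s ∨ i = t) := by decide

lemma top_le_span_of_e {S : Submodule ℝ V3} (h : ∀ i, e i ∈ S) : ⊤ ≤ S := by
  intro x _
  have hx : x = x 0 • e 0 + x 1 • e 1 + x 2 • e 2 := by
    funext j; fin_cases j <;> simp [e, Pi.single_apply]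
  rw [hx]
  exact add_mem (add_mem (S.smul_mem _ (h 0)) (S.smul_mem _ (h 1))) (S.smul_mem _ (h 2))

lemma mem_span_triFun (w : V3 × V3 × V3) :
    w.1 ∈ Submodule.span ℝ (Set.range (triFun w)) ∧
    w.2.1 ∈ Submodule.span ℝ (Set.range (triFun w)) ∧
    w.2.2 ∈ Submodule.span ℝ (Set.range (triFun w)) :=
  ⟨Submodule.subset_span ⟨0, rfl⟩, Submodule.subset_span ⟨1, rfl⟩,
   Submodule.subset_span ⟨2, rfl⟩⟩

lemma span_cStep (b : Bool) (l : Lt) (v : V3 × V3 × V3)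
    (h : ⊤ ≤ Submodule.span ℝ (Set.range (triFun v))) :
    ⊤ ≤ Submodule.span ℝ (Set.range (triFun (cStep b l v))) := by
  refine le_trans h (Submodule.span_le.2 ?_)
  rintro x ⟨i, rfl⟩
  obtain ⟨m0, m1, m2⟩ := mem_span_triFun (cStep b l v)
  set S := Submodule.span ℝ (Set.range (triFun (cStep b l v))) with hS
  cases l <;> cases b <;> fin_cases i <;> simp only [cStep, if_true, if_false, triFun,
    Matrix.cons_val_zero, Matrix.cons_val_one, Matrix.head_cons, Matrix.cons_val_two,
    Matrix.tail_cons] at m0 m1 m2 ⊢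
  -- S-step, b = false : v = ((cStep).2.1 + 2•(cStep).1 stuff)
  all_goals first
    | (exact m2)
    | (exact m1)
    | { have : v.2.1 = (-1 : ℝ) • (-v.2.1) := by module
        rw [this]; exact S.smul_mem _ m0 }
    | { have : v.1 = (v.1 + 2 • v.2.1) + (2 : ℝ) • (-v.2.1) := by module
        rw [this]; exact add_mem m1 (S.smul_mem _ m0) }
    | { have : v.2.2 = (-1 : ℝ) • (-v.2.2) := by module
        rw [this]; exact S.smul_mem _ m0 }
    | { have : v.1 = (v.1 + 2 • v.2.2) + (2 : ℝ) • (-v.2.2) := by module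
        rw [this]; exact add_mem m1 (S.smul_mem _ m0) }
    | { have : v.2.1 = (v.2.1 + 2 • v.2.2) + (2 : ℝ) • (-v.2.2) := by module
        rw [this]; exact add_mem m1 (S.smul_mem _ m0) }

lemma span_gStep (b : Bool) (l : Lt) (v : V3 × V3 × V3)
    (h : ⊤ ≤ Submodule.span ℝ (Set.range (triFun v))) :
    ⊤ ≤ Submodule.span ℝ (Set.range (triFun (gStep b l v))) := by
  refine le_trans h (Submodule.span_le.2 ?_)
  rintro x ⟨i, rfl⟩
  obtain ⟨m0, m1, m2⟩ := mem_span_triFun (gStep b l v)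
  set S := Submodule.span ℝ (Set.range (triFun (gStep b l v))) with hS
  cases l <;> cases b <;> fin_cases i <;> simp only [gStep, if_true, if_false, triFun,
    Matrix.cons_val_zero, Matrix.cons_val_one, Matrix.head_cons, Matrix.cons_val_two,
    Matrix.tail_cons] at m0 m1 m2 ⊢
  all_goals first
    | (exact m2)
    | (exact m1)
    | { have : v.2.1 = (2 : ℝ) • v.1 + (-1 : ℝ) • (2 • v.1 - v.2.1) := by module
        rw [this]; exact add_mem (S.smul_mem _ m1) (S.smul_mem _ m0) }
    | { have : v.2.2 = (2 : ℝ) • v.2.1 + (-1 : ℝ) • (2 • v.2.1 - v.2.2) := by module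
        rw [this]; exact add_mem (S.smul_mem _ m1) (S.smul_mem _ m0) }
    | { have : v.2.2 = (2 : ℝ) • v.1 + (-1 : ℝ) • (2 • v.1 - v.2.2) := by module
        rw [this]; exact add_mem (S.smul_mem _ m1) (S.smul_mem _ m0) }

lemma span_cRev (k s t : Fin 3) (hks : k ≠ s) (hkt : k ≠ t) (hst : s ≠ t) :
    ∀ Y : Word, ⊤ ≤ Submodule.span ℝ (Set.range (triFun (cRev k s t Y)))
  | [] => by
      obtain ⟨m0, m1, m2⟩ := mem_span_triFun (cRev k s t [])
      set S := Submodule.span ℝ (Set.range (triFun (cRev k s t []))) with hS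
      simp only [cRev] at m0 m1 m2
      refine top_le_span_of_e fun i => ?_
      have hk : e k ∈ S := by
        have : e k = (-1 : ℝ) • (-(e k)) := by module
        rw [this]; exact S.smul_mem _ m0
      have hs : e s ∈ S := by
        have : e s = (e s + 2 • e k) + (2 : ℝ) • (-(e k)) := by module
        rw [this]; exact add_mem m1 (S.smul_mem _ m0)
      rcases fin3_cover k s t i hks hkt hst with rfl | rfl | rfl
      · exact hk
      · exact hs
      · exact m2
  | l :: Y => span_cStep _ _ _ (span_cRev k s t hks hkt hst Y)

lemma span_gRev (k s t : Fin 3) (hks : k ≠ s) (hkt : k ≠ t) (hst : s ≠ t) :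
    ∀ Y : Word, ⊤ ≤ Submodule.span ℝ (Set.range (triFun (gRev k s t Y)))
  | [] => by
      obtain ⟨m0, m1, m2⟩ := mem_span_triFun (gRev k s t [])
      set S := Submodule.span ℝ (Set.range (triFun (gRev k s t []))) with hS
      simp only [gRev] at m0 m1 m2
      refine top_le_span_of_e fun i => ?_
      have hk : e k ∈ S := by
        have : e k = (2 : ℝ) • e s + (-1 : ℝ) • (2 • e s - e k) := by module
        rw [this]; exact add_mem (S.smul_mem _ m1) (S.smul_mem _ m0)
      rcases fin3_cover k s t i hks hkt hst with rfl | rfl | rfl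
      · exact hk
      · exact m1
      · exact m2
  | l :: Y => span_gStep _ _ _ (span_gRev k s t hks hkt hst Y)

lemma card_finrank : Fintype.card (Fin 3) = Module.finrank ℝ V3 := by
  simp [Module.finrank_fintype_fun_eq_card]

/-- The c-triple at any word is a basis of ℝ³. -/
noncomputable def cBasis (k s t : Fin 3) (hks : k ≠ s) (hkt : k ≠ t) (hst : s ≠ t)
    (W : Word) : Module.Basis (Fin 3) ℝ V3 :=
  basisOfTopLeSpanOfCardEqFinrank (triFun (c k s t W))
    (span_cRev k s t hks hkt hst W.reverse) card_finrank

lemma cBasis_apply (k s t : Fin 3) (hks : k ≠ s) (hkt : k ≠ t) (hst : s ≠ t)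
    (W : Word) (i : Fin 3) :
    cBasis k s t hks hkt hst W i = triFun (c k s t W) i := by
  simp only [cBasis]
  exact congrFun (coe_basisOfTopLeSpanOfCardEqFinrank _ _ _) i

noncomputable def gBasis (k s t : Fin 3) (hks : k ≠ s) (hkt : k ≠ t) (hst : s ≠ t)
    (W : Word) : Module.Basis (Fin 3) ℝ V3 :=
  basisOfTopLeSpanOfCardEqFinrank (triFun (g k s t W))
    (span_gRev k s t hks hkt hst W.reverse) card_finrank

lemma gBasis_apply (k s t : Fin 3) (hks : k ≠ s) (hkt : k ≠ t) (hst : s ≠ t)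
    (W : Word) (i : Fin 3) :
    gBasis k s t hks hkt hst W i = triFun (g k s t W) i := by
  simp only [gBasis]
  exact congrFun (coe_basisOfTopLeSpanOfCardEqFinrank _ _ _) i
/-- fractal structure of the modified C- and G-patterns. -/
theorem stmt_0 (k s t k' s' t' : Fin 3)
    (hks : k ≠ s) (hkt : k ≠ t) (hst : s ≠ t)
    (hks' : k' ≠ s') (hkt' : k' ≠ t') (hst' : s' ≠ t')
    (W U : Word)
    (hWU : (IsTrunk W ∧ IsTrunk U) ∨ (¬ IsTrunk W ∧ ¬ IsTrunk U)) :
    ∃ (Φ : V3 ≃ₗ[ℝ] V3) (Ψ : V3 ≃ₗ[ℝ] V3), ∀ X : Word,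
      Φ ((c k s t (W ++ X)).1) = (c k' s' t' (U ++ X)).1 ∧
      Φ ((c k s t (W ++ X)).2.1) = (c k' s' t' (U ++ X)).2.1 ∧
      Φ ((c k s t (W ++ X)).2.2) = (c k' s' t' (U ++ X)).2.2 ∧
      Ψ ((g k s t (W ++ X)).1) = (g k' s' t' (U ++ X)).1 ∧
      Ψ ((g k s t (W ++ X)).2.1) = (g k' s' t' (U ++ X)).2.1 ∧
      Ψ ((g k s t (W ++ X)).2.2) = (g k' s' t' (U ++ X)).2.2 := by
  have hb : trunkB W = trunkB U := by
    rcases hWU with ⟨h1, h2⟩ | ⟨h1, h2⟩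
    · rw [(isTrunk_iff W).1 h1, (isTrunk_iff U).1 h2]
    · rw [Bool.eq_false_iff.2 (fun hh => h1 ((isTrunk_iff W).2 hh)),
        Bool.eq_false_iff.2 (fun hh => h2 ((isTrunk_iff U).2 hh))]
  have hbrev : trunkB W.reverse = trunkB U.reverse := by
    rw [trunkB_reverse, trunkB_reverse, hb]
  refine ⟨(cBasis k s t hks hkt hst W).equiv (cBasis k' s' t' hks' hkt' hst' U) (Equiv.refl _),
    (gBasis k s t hks hkt hst W).equiv (gBasis k' s' t' hks' hkt' hst' U) (Equiv.refl _),
    fun X => ?_⟩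
  set Φ := (cBasis k s t hks hkt hst W).equiv (cBasis k' s' t' hks' hkt' hst' U) (Equiv.refl _)
  set Ψ := (gBasis k s t hks hkt hst W).equiv (gBasis k' s' t' hks' hkt' hst' U) (Equiv.refl _)
  have hΦ : ∀ i, Φ (triFun (c k s t W) i) = triFun (c k' s' t' U) i := by
    intro i
    rw [← cBasis_apply k s t hks hkt hst W i, ← cBasis_apply k' s' t' hks' hkt' hst' U i]
    simpa [Φ] using (cBasis k s t hks hkt hst W).equiv_apply i (cBasis k' s' t' hks' hkt' hst' U) (Equiv.refl _)
  have hΨ : ∀ i, Ψ (triFun (g k s t W) i) = triFun (g k' s' t' U) i := by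
    intro i
    rw [← gBasis_apply k s t hks hkt hst W i, ← gBasis_apply k' s' t' hks' hkt' hst' U i]
    simpa [Ψ] using (gBasis k s t hks hkt hst W).equiv_apply i (gBasis k' s' t' hks' hkt' hst' U) (Equiv.refl _)
  have hc0 : mapTri Φ.toLinearMap (cRev k s t W.reverse) = cRev k' s' t' U.reverse := by
    have h0 := hΦ 0; have h1 := hΦ 1; have h2 := hΦ 2
    simp only [triFun, Matrix.cons_val_zero, Matrix.cons_val_one, Matrix.head_cons,
      Matrix.cons_val_two, Matrix.tail_cons] at h0 h1 h2
    simp only [mapTri, c] at *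
    exact Prod.ext h0 (Prod.ext h1 h2)
  have hg0 : mapTri Ψ.toLinearMap (gRev k s t W.reverse) = gRev k' s' t' U.reverse := by
    have h0 := hΨ 0; have h1 := hΨ 1; have h2 := hΨ 2
    simp only [triFun, Matrix.cons_val_zero, Matrix.cons_val_one, Matrix.head_cons,
      Matrix.cons_val_two, Matrix.tail_cons] at h0 h1 h2
    simp only [mapTri, g] at *
    exact Prod.ext h0 (Prod.ext h1 h2)
  have hc := cRev_map k s t k' s' t' Φ.toLinearMap W.reverse U.reverse hbrev hc0 X.reverse
  have hg := gRev_map k s t k' s' t' Ψ.toLinearMap W.reverse U.reverse hbrev hg0 X.reverse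
  have ec : c k s t (W ++ X) = cRev k s t (X.reverse ++ W.reverse) := by
    simp [c, List.reverse_append]
  have ec' : c k' s' t' (U ++ X) = cRev k' s' t' (X.reverse ++ U.reverse) := by
    simp [c, List.reverse_append]
  have eg : g k s t (W ++ X) = gRev k s t (X.reverse ++ W.reverse) := by
    simp [g, List.reverse_append]
  have eg' : g k' s' t' (U ++ X) = gRev k' s' t' (X.reverse ++ U.reverse) := by
    simp [g, List.reverse_append]
  rw [ec, ec', eg, eg', ← hc, ← hg]
  exact ⟨rfl, rfl, rfl, rfl, rfl, rfl⟩

end Markov
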